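/- arXiv:1705.06194 — 2 statements merged into one kernel-verified Lean document; each statement's English description precedes it below -/
import Mathlib

section
/- Let X be a topological space satisfying the following condition (α): for every pairwise disjoint family {A_ξ : ξ ∈ Ξ} of meager subsets of X whose union is non-meager, there exist a subset Ξ' ⊆ Ξ and a nonempty open set U ⊆ X such that both ⋃_{ξ∈Ξ'} A_ξ and ⋃_{ξ∈Ξ∖Ξ'} A_ξ are everywhere of 2nd category in U. Let Y be a metric space and let f : X → Y be a function such that the preimage of every open subset of Y has the Baire property in X. Then f is continuous apart from a 1st category set: there exists a meager set D ⊆ X such that the restriction of f to X ∖ D (with the subspace topology) is continuous. -/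
universe u v

open Set
section
variable {X : Type u} [TopologicalSpace X]




lemma myIsMeagre_union {s t : Set X} (hs : IsMeagre s) (ht : IsMeagre t) :
    IsMeagre (s ∪ t) := by
  rw [IsMeagre, compl_union]; exact Filter.inter_mem hs ht

/-- boundary of open set is nowhere dense -/
lemma nwd_frontier_open {D : Set X} (hD : IsOpen D) : IsNowhereDense (closure D \ D) := by
  have hcl : IsClosed (closure D \ D) := isClosed_closure.sdiff hD
  rw [hcl.isNowhereDense_iff]
  by_contra h
  obtain ⟨x, hx⟩ := nonempty_iff_ne_empty.2 h
  have hxo : x ∈ interior (closure D \ D) := hx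
  have hsub : interior (closure D \ D) ⊆ closure D := interior_subset.trans diff_subset
  have : (interior (closure D \ D)) ∩ D ≠ ∅ := by
    have := hsub hxo
    rw [mem_closure_iff] at this
    intro hemp
    exact absurd (this _ isOpen_interior hxo) (by rw [hemp]; simp)
  obtain ⟨z, hz1, hz2⟩ := nonempty_iff_ne_empty.2 this
  exact (interior_subset hz1).2 hz2

lemma nwd_frontier_open' {D : Set X} (hD : IsOpen D) : IsMeagre (closure D \ D) := by
  rw [isMeagre_iff_countable_union_isNowhereDense]
  exact ⟨{closure D \ D}, by simpa using nwd_frontier_open hD, countable_singleton _, by simp⟩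

/-- union of meager sets sitting inside pairwise disjoint open sets is meager -/
lemma meagre_iUnion_of_disjoint_open {ι : Type*} {W M : ι → Set X}
    (hWo : ∀ i, IsOpen (W i)) (hWd : Pairwise (Function.onFun Disjoint W))
    (hMW : ∀ i, M i ⊆ W i) (hM : ∀ i, IsMeagre (M i)) : IsMeagre (⋃ i, M i) := by
  -- extract nowhere dense decompositions
  have h : ∀ i, ∃ g : ℕ → Set X, (∀ k, IsNowhereDense (g k)) ∧ M i ⊆ ⋃ k, g k := by
    intro i
    obtain ⟨S, hS1, hS2, hS3⟩ := isMeagre_iff_countable_union_isNowhereDense.1 (hM i)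
    obtain ⟨g, hg⟩ := (hS2.insert ∅).exists_eq_range (insert_nonempty _ _)
    refine ⟨g, ?_, ?_⟩
    · intro k
      have : g k ∈ insert ∅ S := by rw [hg]; exact mem_range_self k
      rcases this with h | h
      · rw [h]; exact isNowhereDense_empty
      · exact hS1 _ h
    · intro x hx
      obtain ⟨t, ht, hxt⟩ := hS3 hx
      have : t ∈ range g := by rw [← hg]; exact mem_insert_of_mem _ ht
      obtain ⟨k, rfl⟩ := this
      exact mem_iUnion.2 ⟨k, hxt⟩
  choose g hg1 hg2 using h
  set N : ℕ → Set X := fun k => ⋃ i, (g i k ∩ W i) with hN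
  have hNnwd : ∀ k, IsNowhereDense (N k) := by
    intro k
    by_contra h
    obtain ⟨x, hx⟩ := nonempty_iff_ne_empty.2 h
    set O := interior (closure (N k)) with hO
    have hOop : IsOpen O := isOpen_interior
    have hOsub : O ⊆ closure (N k) := interior_subset
    -- O meets N k
    have hmeet : (O ∩ N k).Nonempty := by
      have := mem_closure_iff.1 (hOsub hx) O hOop hx
      exact this
    obtain ⟨w, hwO, hwN⟩ := hmeet
    obtain ⟨i, hwi⟩ := mem_iUnion.1 hwN
    have hO' : IsOpen (O ∩ W i) := hOop.inter (hWo i)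
    have hO'ne : (O ∩ W i).Nonempty := ⟨w, hwO, hwi.2⟩
    -- O ∩ W i ⊆ closure (g i k)
    have hsub : O ∩ W i ⊆ closure (g i k) := by
      intro z hz
      rw [mem_closure_iff]
      intro V hV hzV
      have hz' : z ∈ closure (N k) := hOsub hz.1
      rw [mem_closure_iff] at hz'
      obtain ⟨u, hu1, hu2⟩ := hz' (V ∩ (O ∩ W i)) (hV.inter hO') ⟨hzV, hz⟩
      obtain ⟨j, huj⟩ := mem_iUnion.1 hu2
      have : j = i := by
        by_contra hne
        exact (hWd hne).ne_of_mem huj.2 hu1.2.2 rfl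
      rw [this] at huj
      exact ⟨u, hu1.1, huj.1⟩
    have : O ∩ W i ⊆ interior (closure (g i k)) :=
      hO'.subset_interior_iff.2 hsub
    rw [hg1 i k] at this
    exact absurd (this hO'ne.some_mem) (by simp)
  rw [isMeagre_iff_countable_union_isNowhereDense]
  refine ⟨range N, ?_, countable_range N, ?_⟩
  · rintro t ⟨k, rfl⟩; exact hNnwd k
  · intro x hx
    obtain ⟨i, hxi⟩ := mem_iUnion.1 hx
    obtain ⟨k, hk⟩ := mem_iUnion.1 (hg2 i hxi)
    exact ⟨N k, mem_range_self k, mem_iUnion.2 ⟨i, hk, hMW i hxi⟩⟩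

/-- exists a maximal pairwise disjoint subfamily -/
lemma exists_maximal_disjoint (S : Set (Set X)) :
    ∃ D ⊆ S, (D.Pairwise fun a b => Disjoint a b) ∧
      ∀ V ∈ S, V.Nonempty → ¬ Disjoint V (⋃₀ D) := by
  set P : Set (Set (Set X)) := {D | D ⊆ S ∧ D.Pairwise fun a b => Disjoint a b} with hP
  have hzorn : ∀ c ⊆ P, IsChain (· ⊆ ·) c → ∃ ub ∈ P, ∀ s ∈ c, s ⊆ ub := by
    intro c hc hchain
    refine ⟨⋃₀ c, ⟨?_, ?_⟩, fun s hs => subset_sUnion_of_mem hs⟩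
    · exact sUnion_subset fun d hd => (hc hd).1
    · intro a ha b hb hab
      obtain ⟨d, hd, had⟩ := ha
      obtain ⟨e, he, hbe⟩ := hb
      rcases hchain.total hd he with h | h
      · exact (hc he).2 (h had) hbe hab
      · exact (hc hd).2 had (h hbe) hab
  obtain ⟨m, hm⟩ := zorn_subset P hzorn
  · refine ⟨m, hm.prop.1, hm.prop.2, ?_⟩
    intro V hVS hVne hVdisj
    have hVm : V ∉ m := by
      intro hVm
      have hdd : Disjoint V V := hVdisj.mono_right (subset_sUnion_of_mem hVm)
      rw [disjoint_self] at hdd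
      rw [hdd] at hVne
      exact (not_nonempty_empty hVne)
    have hins : insert V m ∈ P := by
      constructor
      · exact insert_subset hVS hm.prop.1
      · intro a ha b hb hab
        rcases ha with rfl | ha <;> rcases hb with rfl | hb
        · exact absurd rfl hab
        · exact disjoint_sUnion_right.1 hVdisj b hb
        · exact (disjoint_sUnion_right.1 hVdisj a ha).symm
        · exact hm.prop.2 ha hb hab
    have heq := hm.eq_of_subset hins (subset_insert V m)
    exact hVm (by rw [heq]; exact mem_insert V m)


/-- the canonical open core of a set -/
def bCore (E : Set X) : Set X := ⋃₀ {W : Set X | IsOpen W ∧ IsMeagre (W \ E)}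

lemma bCore_isOpen (E : Set X) : IsOpen (bCore E) :=
  isOpen_sUnion fun _ h => h.1

/-- key: the core minus the set is always meagre -/
lemma bCore_diff_meagre (E : Set X) : IsMeagre (bCore E \ E) := by
  set S : Set (Set X) := {W : Set X | IsOpen W ∧ IsMeagre (W \ E)} with hS
  obtain ⟨D, hDS, hDdisj, hDmax⟩ := exists_maximal_disjoint S
  set T := ⋃₀ D with hT
  have hTopen : IsOpen T := isOpen_sUnion fun W hW => (hDS hW).1
  -- T \ E is meagre
  have hTE : IsMeagre (T \ E) := by
    have : T \ E = ⋃ (W : D), (W.1 \ E) := by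
      ext z; simp only [hT, mem_diff, mem_sUnion, iUnion_coe_set, mem_iUnion]
      constructor
      · rintro ⟨⟨W, hW, hz⟩, hzE⟩; exact ⟨W, hW, hz, hzE⟩
      · rintro ⟨W, hW, hz, hzE⟩; exact ⟨⟨W, hW, hz⟩, hzE⟩
    rw [this]
    refine meagre_iUnion_of_disjoint_open (W := fun (W : D) => W.1) ?_ ?_ ?_ ?_
    · exact fun W => (hDS W.2).1
    · intro a b hab
      exact hDdisj a.2 b.2 (fun h => hab (Subtype.ext h))
    · exact fun W => diff_subset
    · exact fun W => (hDS W.2).2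
  -- bCore E ⊆ closure T
  have hsub : bCore E ⊆ closure T := by
    intro x hx
    by_contra hxc
    obtain ⟨W, hWS, hxW⟩ := hx
    have hV : W \ closure T ∈ S := by
      refine ⟨(hWS.1).sdiff isClosed_closure, ?_⟩
      exact hWS.2.mono (fun z (hz : z ∈ (W \ closure T) \ E) => (⟨hz.1.1, hz.2⟩ : z ∈ W \ E))
    have hne : (W \ closure T).Nonempty := ⟨x, hxW, hxc⟩
    refine hDmax _ hV hne ?_
    exact disjoint_left.2 fun z hz hzT => hz.2 (subset_closure hzT)
  have : bCore E \ E ⊆ (T \ E) ∪ (closure T \ T) := by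
    intro z hz
    by_cases hzT : z ∈ T
    · exact Or.inl ⟨hzT, hz.2⟩
    · exact Or.inr ⟨hsub hz.1, hzT⟩
  exact (myIsMeagre_union hTE (nwd_frontier_open' hTopen)).mono this

/-- Banach category theorem: any union of open meagre sets is meagre. -/
lemma banach_category {S : Set (Set X)} (h : ∀ W ∈ S, IsOpen W ∧ IsMeagre W) :
    IsMeagre (⋃₀ S) := by
  have : ⋃₀ S ⊆ bCore (∅ : Set X) := by
    intro x ⟨W, hW, hxW⟩
    exact ⟨W, ⟨(h W hW).1, by simpa using (h W hW).2⟩, hxW⟩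
  have h2 : IsMeagre (bCore (∅ : Set X)) := by
    have := bCore_diff_meagre (∅ : Set X)
    simpa using this
  exact h2.mono this

/-- if E has the Baire property then E \ bCore E is meagre -/
lemma diff_bCore_meagre {E : Set X} (hE : ∃ U : Set X, IsOpen U ∧ IsMeagre (symmDiff E U)) :
    IsMeagre (E \ bCore E) := by
  obtain ⟨H, hHo, hHm⟩ := hE
  have hHS : H ⊆ bCore E := by
    intro x hx
    refine ⟨H, ⟨hHo, hHm.mono ?_⟩, hx⟩
    intro z hz
    exact Or.inr ⟨hz.1, hz.2⟩
  refine (hHm.mono ?_)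
  intro z hz
  exact Or.inl ⟨hz.1, fun h => hz.2 (hHS h)⟩

/-- Key lemma from condition (α): a pairwise disjoint family of meagre sets whose
partial unions can be separated by open-mod-meagre sets has meagre union. -/
lemma alpha_lemma
    (hα : ∀ (Ξ : Type u) (A : Ξ → Set X), Pairwise (Function.onFun Disjoint A) →
      (∀ ξ, IsMeagre (A ξ)) → ¬ IsMeagre (⋃ ξ, A ξ) →
      ∃ (Ξ' : Set Ξ) (U : Set X), IsOpen U ∧ U.Nonempty ∧
        (∀ x ∈ U, ∀ V : Set X, IsOpen V → x ∈ V →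
          ¬ IsMeagre ((⋃ ξ ∈ Ξ', A ξ) ∩ V) ∧ ¬ IsMeagre ((⋃ ξ ∈ Ξ'ᶜ, A ξ) ∩ V)))
    {ι : Type v} (A : ι → Set X) (hdisj : Pairwise (Function.onFun Disjoint A))
    (hmeag : ∀ i, IsMeagre (A i))
    (hcov : ∀ s : Set ι, ∃ H₁ H₂ P : Set X, IsOpen H₁ ∧ IsOpen H₂ ∧ IsMeagre P ∧
      (⋃ i ∈ s, A i) ⊆ H₁ ∪ P ∧ (⋃ i ∈ sᶜ, A i) ⊆ H₂ ∪ P ∧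
      (⋃ i ∈ s, A i) ∩ H₂ ⊆ P) :
    IsMeagre (⋃ i, A i) := by
  by_contra hnm
  set Ξ : Type u := ↥(range A) with hΞ
  set A' : Ξ → Set X := fun ξ => ξ.1 with hA'
  have hdisj' : Pairwise (Function.onFun Disjoint A') := by
    intro ξ η hne
    obtain ⟨i, hi⟩ := ξ.2
    obtain ⟨j, hj⟩ := η.2
    have hij : i ≠ j := by
      rintro rfl
      exact hne (Subtype.ext (hi ▸ hj ▸ rfl))
    have := hdisj hij
    simp only [Function.onFun] at this ⊢
    rw [hA']
    simp only [← hi, ← hj]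
    exact this
  have hmeag' : ∀ ξ, IsMeagre (A' ξ) := by
    rintro ⟨S, i, hi⟩
    simpa [hA', ← hi] using hmeag i
  have huni : (⋃ ξ, A' ξ) = ⋃ i, A i := by
    ext z
    simp only [mem_iUnion, hA']
    constructor
    · rintro ⟨⟨S, i, hi⟩, hz⟩; exact ⟨i, by rwa [hi]⟩
    · rintro ⟨i, hz⟩; exact ⟨⟨A i, mem_range_self i⟩, hz⟩
  obtain ⟨Ξ', U, hUo, hUne, hU⟩ := hα Ξ A' hdisj' hmeag' (by rwa [huni])
  set s : Set ι := {i | (⟨A i, mem_range_self i⟩ : Ξ) ∈ Ξ'} with hs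
  have heq1 : (⋃ ξ ∈ Ξ', A' ξ) = ⋃ i ∈ s, A i := by
    ext z
    simp only [mem_iUnion, hA']
    constructor
    · rintro ⟨⟨S, i, hi⟩, hmem, hz⟩
      refine ⟨i, ?_, by rwa [hi]⟩
      have : (⟨A i, mem_range_self i⟩ : Ξ) = ⟨S, ⟨i, hi⟩⟩ := Subtype.ext hi
      rw [hs]; simpa [this] using hmem
    · rintro ⟨i, hmem, hz⟩
      exact ⟨⟨A i, mem_range_self i⟩, hmem, hz⟩
  have heq2 : (⋃ ξ ∈ Ξ'ᶜ, A' ξ) = ⋃ i ∈ sᶜ, A i := by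
    ext z
    simp only [mem_iUnion, hA']
    constructor
    · rintro ⟨⟨S, i, hi⟩, hmem, hz⟩
      refine ⟨i, ?_, by rwa [hi]⟩
      have he : (⟨A i, mem_range_self i⟩ : Ξ) = ⟨S, ⟨i, hi⟩⟩ := Subtype.ext hi
      intro hmem2
      rw [hs] at hmem2
      exact hmem (by rw [← he]; exact hmem2)
    · rintro ⟨i, hmem, hz⟩
      exact ⟨⟨A i, mem_range_self i⟩, hmem, hz⟩
  obtain ⟨H₁, H₂, P, hH₁o, hH₂o, hPm, hsub1, hsub2, hint⟩ := hcov s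
  obtain ⟨x₀, hx₀⟩ := hUne
  have h0 := hU x₀ hx₀ U hUo hx₀
  rw [heq1, heq2] at h0
  have hH1ne : (H₁ ∩ U).Nonempty := by
    rw [nonempty_iff_ne_empty]
    intro hemp
    refine h0.1 (hPm.mono ?_)
    rintro z ⟨hz1, hz2⟩
    rcases hsub1 hz1 with h | h
    · exact absurd (mem_inter h hz2) (by rw [hemp]; simp)
    · exact h
  obtain ⟨x₁, hx₁⟩ := hH1ne
  have h1 := hU x₁ hx₁.2 (H₁ ∩ U) (hH₁o.inter hUo) hx₁
  rw [heq1, heq2] at h1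
  have hH2ne : (H₂ ∩ (H₁ ∩ U)).Nonempty := by
    rw [nonempty_iff_ne_empty]
    intro hemp
    refine h1.2 (hPm.mono ?_)
    rintro z ⟨hz1, hz2⟩
    rcases hsub2 hz1 with h | h
    · exact absurd (mem_inter h hz2) (by rw [hemp]; simp)
    · exact h
  obtain ⟨x₂, hx₂⟩ := hH2ne
  have h2 := hU x₂ hx₂.2.2 (H₂ ∩ (H₁ ∩ U)) (hH₂o.inter (hH₁o.inter hUo)) hx₂
  rw [heq1, heq2] at h2
  refine h2.1 (hPm.mono ?_)
  rintro z ⟨hz1, hz2⟩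
  exact hint ⟨hz1, hz2.1⟩

noncomputable section
namespace KunugiAux
variable {Y : Type v} [MetricSpace Y]

def rho (n : ℕ) : ℝ := (2⁻¹ : ℝ) ^ n

lemma rho_pos (n : ℕ) : 0 < rho n := by unfold rho; positivity

def stoneC (m n : ℕ) (T : Set Y) (y : Y) : Set Y :=
  {c | c ∈ Metric.ball y (1/(m+1)) ∧
    (∀ y', WellOrderingRel y' y → c ∉ Metric.ball y' (1/(m+1))) ∧
    Metric.ball c (3 * rho n) ⊆ Metric.ball y (1/(m+1)) ∧ c ∉ T}

def stoneDfun (m n : ℕ) (T : Set Y) (y : Y) : Set Y :=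
  ⋃ c ∈ stoneC m n T y, Metric.ball c (rho n)

def stoneP (m : ℕ) : ℕ → Set Y × (Y → Set Y)
  | 0 => (∅, stoneDfun m 0 ∅)
  | (n+1) => ((stoneP m n).1 ∪ ⋃ y, (stoneP m n).2 y,
      stoneDfun m (n+1) ((stoneP m n).1 ∪ ⋃ y, (stoneP m n).2 y))

def stoneD (m n : ℕ) (y : Y) : Set Y := (stoneP m n).2 y
def stoneT (m n : ℕ) : Set Y := (stoneP m n).1

lemma stoneD_eq (m n : ℕ) : (stoneD m n : Y → Set Y) = stoneDfun m n (stoneT m n) := by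
  cases n <;> rfl

lemma stoneD_isOpen (m n : ℕ) (y : Y) : IsOpen (stoneD m n y : Set Y) := by
  rw [stoneD_eq]
  exact isOpen_biUnion fun c _ => Metric.isOpen_ball

lemma stoneD_disjoint (m n : ℕ) : Pairwise (Function.onFun Disjoint (stoneD m n : Y → Set Y)) := by
  have key : ∀ y₁ y₂ : Y, WellOrderingRel y₁ y₂ →
      Disjoint (stoneD m n y₁) (stoneD m n y₂) := by
    intro y₁ y₂ hlt
    rw [stoneD_eq]
    simp only [stoneDfun, disjoint_iUnion_left, disjoint_iUnion_right]
    intro c₂ hc₂ c₁ hc₁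
    have hfar : 3 * rho n ≤ dist c₁ c₂ := by
      by_contra h
      push_neg at h
      exact hc₂.2.1 y₁ hlt (hc₁.2.2.1 (by rwa [Metric.mem_ball, dist_comm]))
    refine Metric.ball_disjoint_ball ?_
    calc rho n + rho n = 2 * rho n := by ring
    _ ≤ 3 * rho n := by nlinarith [rho_pos n]
    _ ≤ dist c₁ c₂ := hfar
  intro y₁ y₂ hne
  rcases trichotomous_of (WellOrderingRel (α := Y)) y₁ y₂
    with h | h | h
  · exact key y₁ y₂ h
  · exact absurd h hne
  · exact (key y₂ y₁ h).symm

lemma stoneT_subset (m n : ℕ) :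
    (stoneT m n : Set Y) ⊆ ⋃ n', ⋃ y, stoneD m n' y := by
  induction n with
  | zero => simp [stoneT, stoneP]
  | succ n ih =>
    have : (stoneT m (n+1) : Set Y) = stoneT m n ∪ ⋃ y, stoneD m n y := rfl
    rw [this]
    refine union_subset ih ?_
    intro z hz
    obtain ⟨y, hy⟩ := mem_iUnion.1 hz
    exact mem_iUnion.2 ⟨n, mem_iUnion.2 ⟨y, hy⟩⟩

lemma one_div_m_pos (m : ℕ) : (0:ℝ) < 1/(m+1) := by positivity

lemma stoneD_covers (m : ℕ) (x : Y) : ∃ n y, x ∈ (stoneD m n y : Set Y) := by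
  by_contra hcon
  push_neg at hcon
  set Q : Set Y := {y | x ∈ Metric.ball y (1/(m+1))} with hQ
  have hQne : Q.Nonempty := ⟨x, Metric.mem_ball_self (one_div_m_pos m)⟩
  have hwf : WellFounded (WellOrderingRel (α := Y)) :=
    (IsWellFounded.wf : WellFounded (WellOrderingRel (α := Y)))
  set y₀ := hwf.min Q hQne with hy₀
  have hy₀Q : y₀ ∈ Q := hwf.min_mem Q hQne
  have hdist : dist x y₀ < 1/(m+1) := Metric.mem_ball.1 hy₀Q
  obtain ⟨n, hn⟩ : ∃ n : ℕ, (2⁻¹:ℝ)^n < (1/(m+1) - dist x y₀)/3 := by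
    refine exists_pow_lt_of_lt_one (by linarith) (by norm_num)
  have hrho : 3 * rho n < 1/(m+1) - dist x y₀ := by
    have : rho n = (2⁻¹:ℝ)^n := rfl
    rw [this]; linarith
  have hxT : x ∉ (stoneT m n : Set Y) := by
    intro hx
    obtain ⟨n', hn'⟩ := mem_iUnion.1 (stoneT_subset m n hx)
    obtain ⟨y, hy⟩ := mem_iUnion.1 hn'
    exact hcon n' y hy
  have hxC : x ∈ stoneC m n (stoneT m n) y₀ := by
    refine ⟨hy₀Q, ?_, ?_, hxT⟩
    · intro y' hy' hx'
      exact hwf.not_lt_min Q hx' hy'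
    · intro z hz
      rw [Metric.mem_ball] at hz ⊢
      calc dist z y₀ ≤ dist z x + dist x y₀ := dist_triangle z x y₀
      _ < 3 * rho n + dist x y₀ := by linarith
      _ < 1/(m+1) := by linarith
  refine hcon n y₀ ?_
  rw [stoneD_eq]
  exact mem_biUnion hxC (by simp [Metric.mem_ball, rho_pos n])

lemma stoneD_small (m n : ℕ) (y : Y) :
    (stoneD m n y : Set Y) ⊆ Metric.ball y (1/(m+1)) := by
  rw [stoneD_eq]
  intro z hz
  obtain ⟨c, hc, hzc⟩ := by simpa [stoneDfun] using hz
  refine hc.2.2.1 ?_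
  rw [Metric.mem_ball]
  have := rho_pos n
  linarith

lemma exists_sigma_disjoint_base (Y : Type v) [MetricSpace Y] :
    ∃ B : ℕ × ℕ → Y → Set Y, (∀ k y, IsOpen (B k y)) ∧
      (∀ k, Pairwise (Function.onFun Disjoint (B k))) ∧
      ∀ (x : Y) (ε : ℝ), 0 < ε → ∃ k y, x ∈ B k y ∧ B k y ⊆ Metric.ball x ε := by
  refine ⟨fun k => stoneD k.1 k.2, fun k y => stoneD_isOpen k.1 k.2 y,
    fun k => stoneD_disjoint k.1 k.2, ?_⟩
  intro x ε hε
  obtain ⟨m, hm⟩ := exists_nat_one_div_lt (show (0:ℝ) < ε/2 by linarith)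
  obtain ⟨n, y, hxy⟩ := stoneD_covers m x
  refine ⟨(m, n), y, hxy, ?_⟩
  have hxb := stoneD_small m n y hxy
  rw [Metric.mem_ball] at hxb
  intro z hz
  have hzb := stoneD_small m n y hz
  rw [Metric.mem_ball] at hzb ⊢
  calc dist z x ≤ dist z y + dist y x := dist_triangle z y x
  _ < 1/(m+1) + 1/(m+1) := by rw [dist_comm y x]; linarith
  _ < ε/2 + ε/2 := by linarith
  _ = ε := by ring

end KunugiAux

end

/-- A set has the Baire property if its symmetric difference with some open set
is meager. -/
def HasBaireProperty {X : Type u} [TopologicalSpace X] (s : Set X) : Prop :=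
  ∃ U : Set X, IsOpen U ∧ IsMeagre (symmDiff s U)

open KunugiAux

/-- **Kunugi's Theorem.** If `X` satisfies condition (α) and `f : X → Y` (with `Y`
metric) has the Baire property, then `f` is continuous apart from a 1st category
set. -/
theorem kunugi {X : Type u} [TopologicalSpace X] {Y : Type v} [MetricSpace Y]
    (hα : ∀ (Ξ : Type u) (A : Ξ → Set X), Pairwise (Function.onFun Disjoint A) →
      (∀ ξ, IsMeagre (A ξ)) → ¬ IsMeagre (⋃ ξ, A ξ) →
      ∃ (Ξ' : Set Ξ) (U : Set X), IsOpen U ∧ U.Nonempty ∧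
        (∀ x ∈ U, ∀ V : Set X, IsOpen V → x ∈ V →
          ¬ IsMeagre ((⋃ ξ ∈ Ξ', A ξ) ∩ V) ∧ ¬ IsMeagre ((⋃ ξ ∈ Ξ'ᶜ, A ξ) ∩ V)))
    (f : X → Y) (hf : ∀ V : Set Y, IsOpen V → HasBaireProperty (f ⁻¹' V)) :
    ∃ D : Set X, IsMeagre D ∧ Continuous (Dᶜ.restrict f) := by
  classical
  obtain ⟨B, hBo, hBd, hBbase⟩ := exists_sigma_disjoint_base Y
  set E : ℕ × ℕ → Y → Set X := fun k y => f ⁻¹' (B k y) with hE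
  set C : ℕ × ℕ → Y → Set X := fun k y => bCore (E k y) with hC
  have hEdisj : ∀ k, Pairwise (Function.onFun Disjoint fun y => E k y) := by
    intro k y y' hne
    exact Disjoint.preimage f (hBd k hne)
  have hEBP : ∀ k y, ∃ U : Set X, IsOpen U ∧ IsMeagre (symmDiff (E k y) U) :=
    fun k y => hf _ (hBo k y)
  have hEC : ∀ k y, IsMeagre (E k y \ C k y) := fun k y => diff_bCore_meagre (hEBP k y)
  have hCE : ∀ k y, IsMeagre (C k y \ E k y) := fun k y => bCore_diff_meagre _
  -- part 1 : ⋃ y, E k y \ C k y is meagre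
  have hpart1 : ∀ k, IsMeagre (⋃ y, (E k y \ C k y)) := by
    intro k
    refine alpha_lemma hα (fun y => E k y \ C k y) ?_ ?_ ?_
    · intro y y' hne
      exact ((hEdisj k hne).mono diff_subset diff_subset)
    · exact fun y => hEC k y
    · intro s
      obtain ⟨H₁, hH₁o, hP₁⟩ := hf (⋃ y ∈ s, B k y) (isOpen_biUnion fun y _ => hBo k y)
      obtain ⟨H₂, hH₂o, hP₂⟩ := hf (⋃ y ∈ sᶜ, B k y) (isOpen_biUnion fun y _ => hBo k y)
      refine ⟨H₁, H₂, symmDiff (f ⁻¹' (⋃ y ∈ s, B k y)) H₁ ∪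
        symmDiff (f ⁻¹' (⋃ y ∈ sᶜ, B k y)) H₂, hH₁o, hH₂o,
        myIsMeagre_union hP₁ hP₂, ?_, ?_, ?_⟩
      · rintro z hz
        obtain ⟨y, hy, hzy⟩ := mem_iUnion₂.1 hz
        have hzG : z ∈ f ⁻¹' (⋃ y ∈ s, B k y) := by
          simp only [mem_preimage, mem_iUnion]
          exact ⟨y, hy, hzy.1⟩
        by_cases hzH : z ∈ H₁
        · exact Or.inl hzH
        · exact Or.inr (mem_union_left _ (Set.mem_symmDiff.2 (Or.inl ⟨hzG, hzH⟩)))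
      · rintro z hz
        obtain ⟨y, hy, hzy⟩ := mem_iUnion₂.1 hz
        have hzG : z ∈ f ⁻¹' (⋃ y ∈ sᶜ, B k y) := by
          simp only [mem_preimage, mem_iUnion]
          exact ⟨y, hy, hzy.1⟩
        by_cases hzH : z ∈ H₂
        · exact Or.inl hzH
        · exact Or.inr (mem_union_right _ (Set.mem_symmDiff.2 (Or.inl ⟨hzG, hzH⟩)))
      · rintro z ⟨hz1, hz2⟩
        obtain ⟨y, hy, hzy⟩ := mem_iUnion₂.1 hz1
        have hzG2 : z ∉ f ⁻¹' (⋃ y ∈ sᶜ, B k y) := by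
          simp only [mem_preimage, mem_iUnion]
          rintro ⟨y', hy', hzy'⟩
          have hne : y ≠ y' := by rintro rfl; exact hy' hy
          exact disjoint_left.1 (hBd k hne) hzy.1 hzy'
        exact mem_union_right _ (Set.mem_symmDiff.2 (Or.inr ⟨hz2, hzG2⟩))
  -- the overlap set of the cores
  have hZ : ∀ k, IsMeagre (⋃₀ {W : Set X | ∃ y y', y ≠ y' ∧ W = C k y ∩ C k y'}) := by
    intro k
    refine banach_category ?_
    rintro W ⟨y, y', hne, rfl⟩
    refine ⟨(bCore_isOpen _).inter (bCore_isOpen _), ?_⟩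
    refine (myIsMeagre_union (hCE k y) (hCE k y')).mono ?_
    rintro z ⟨hz1, hz2⟩
    by_cases hq : z ∈ E k y
    · have : z ∉ E k y' := fun h => disjoint_left.1 (hEdisj k hne) hq h
      exact Or.inr ⟨hz2, this⟩
    · exact Or.inl ⟨hz1, hq⟩
  -- part 2 : ⋃ y, C k y \ E k y is meagre
  have hpart2 : ∀ k, IsMeagre (⋃ y, (C k y \ E k y)) := by
    intro k
    set Z := ⋃₀ {W : Set X | ∃ y y', y ≠ y' ∧ W = C k y ∩ C k y'} with hZdef
    have hmain : IsMeagre (⋃ y, ((C k y \ E k y) \ Z)) := by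
      refine alpha_lemma hα (fun y => (C k y \ E k y) \ Z) ?_ ?_ ?_
      · intro y y' hne
        simp only [Function.onFun]
        rw [disjoint_left]
        rintro z ⟨hz1, hz2⟩ ⟨hz1', _⟩
        exact hz2 ⟨C k y ∩ C k y', ⟨y, y', hne, rfl⟩, hz1.1, hz1'.1⟩
      · exact fun y => (hCE k y).mono diff_subset
      · intro s
        refine ⟨⋃ y ∈ s, C k y, ⋃ y ∈ sᶜ, C k y, ∅,
          isOpen_biUnion fun y _ => bCore_isOpen _,
          isOpen_biUnion fun y _ => bCore_isOpen _, IsMeagre.empty, ?_, ?_, ?_⟩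
        · rintro z hz
          obtain ⟨y, hy, hzy⟩ := mem_iUnion₂.1 hz
          exact Or.inl (mem_iUnion₂.2 ⟨y, hy, hzy.1.1⟩)
        · rintro z hz
          obtain ⟨y, hy, hzy⟩ := mem_iUnion₂.1 hz
          exact Or.inl (mem_iUnion₂.2 ⟨y, hy, hzy.1.1⟩)
        · rintro z ⟨hz1, hz2⟩
          obtain ⟨y, hy, hzy⟩ := mem_iUnion₂.1 hz1
          obtain ⟨y', hy', hzy'⟩ := mem_iUnion₂.1 hz2
          have hne : y ≠ y' := by rintro rfl; exact hy' hy
          exact absurd ⟨C k y ∩ C k y', ⟨y, y', hne, rfl⟩, hzy.1.1, hzy'⟩ hzy.2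
    refine (myIsMeagre_union hmain (hZ k)).mono ?_
    intro z hz
    obtain ⟨y, hzy⟩ := mem_iUnion.1 hz
    by_cases hq : z ∈ Z
    · exact Or.inr hq
    · exact Or.inl (mem_iUnion.2 ⟨y, hzy, hq⟩)
  -- the exceptional set
  set Dk : ℕ × ℕ → Set X :=
    fun k => (⋃ y, (E k y \ C k y)) ∪ (⋃ y, (C k y \ E k y)) with hDk
  have hDkm : ∀ k, IsMeagre (Dk k) := fun k => myIsMeagre_union (hpart1 k) (hpart2 k)
  set D : Set X := ⋃ k, Dk k with hD
  have hDm : IsMeagre D := by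
    have : D = ⋃ n : ℕ, Dk (Denumerable.ofNat (ℕ × ℕ) n) := by
      ext z
      simp only [hD, mem_iUnion]
      constructor
      · rintro ⟨k, hk⟩
        exact ⟨Encodable.encode k, by rwa [Denumerable.ofNat_encode]⟩
      · rintro ⟨n, hn⟩
        exact ⟨_, hn⟩
    rw [this]
    exact isMeagre_iUnion fun n => hDkm _
  refine ⟨D, hDm, ?_⟩
  rw [continuous_iff_continuousAt]
  intro x
  rw [ContinuousAt, Metric.tendsto_nhds]
  intro ε hε
  obtain ⟨k, y, hfx, hsub⟩ := hBbase (f x.1) ε hε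
  have hx1 : x.1 ∈ E k y := hfx
  have hxD : x.1 ∉ D := x.2
  have hxC : x.1 ∈ C k y := by
    by_contra h
    exact hxD (mem_iUnion.2 ⟨k, Or.inl (mem_iUnion.2 ⟨y, hx1, h⟩)⟩)
  have hnhds : {z : ↥Dᶜ | z.1 ∈ C k y} ∈ nhds x := by
    have hop : IsOpen {z : ↥Dᶜ | z.1 ∈ C k y} :=
      (bCore_isOpen _).preimage continuous_subtype_val
    exact hop.mem_nhds hxC
  refine Filter.eventually_of_mem hnhds ?_
  intro z hz
  have hzE : z.1 ∈ E k y := by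
    by_contra h
    exact z.2 (mem_iUnion.2 ⟨k, Or.inr (mem_iUnion.2 ⟨y, hz, h⟩)⟩)
  have : f z.1 ∈ Metric.ball (f x.1) ε := hsub hzE
  simpa [Set.restrict, Metric.mem_ball] using this
end
end

section
/- Let Y be a metric space and let ε > 0. Then there exists a family of sets Yⁿ_ξ ⊆ Y, indexed by n ∈ ℕ (n ≥ 1) and by ξ in some index set (depending on n), such that: (i) Y = ⋃_{n,ξ} Yⁿ_ξ; (ii) each Yⁿ_ξ is the set-theoretic difference of two open subsets of Y; (iii) for each n, any two distinct sets Yⁿ_ξ and Yⁿ_{ξ'} satisfy dist(x, x') > 1/n for all x ∈ Yⁿ_ξ and x' ∈ Yⁿ_{ξ'}; and (iv) the diameter of each Yⁿ_ξ is less than ε. -/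
/-- **Montgomery-type decomposition (Appendix, Proposition 7.1).** Every metric
space `Y` is, for every `ε > 0`, the union over `n ≥ 1` of families `F n` of
sets, each set a difference of two open sets, of diameter `< ε`, with any two
distinct members of `F n` at mutual distance `> 1/n`. -/
theorem montgomery_decomposition {Y : Type*} [MetricSpace Y] (ε : ℝ) (hε : 0 < ε) :
    ∃ F : ℕ → Set (Set Y),
      (⋃ n ∈ {n : ℕ | 1 ≤ n}, ⋃ S ∈ F n, S) = Set.univ ∧
      (∀ n : ℕ, 1 ≤ n → ∀ S ∈ F n, ∃ U V : Set Y, IsOpen U ∧ IsOpen V ∧ S = U \ V) ∧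
      (∀ n : ℕ, 1 ≤ n → ∀ S ∈ F n, ∀ T ∈ F n, S ≠ T →
        ∀ x ∈ S, ∀ y ∈ T, dist x y > 1 / (n : ℝ)) ∧
      (∀ n : ℕ, 1 ≤ n → ∀ S ∈ F n, EMetric.diam S < ENNReal.ofReal ε) := by
  classical
  set R : ℝ := ε / 4 with hRdef
  have hR0 : 0 < R := by positivity
  let lt : Y → Y → Prop := WellOrderingRel
  have wf : WellFounded lt := (IsWellFounded.wf)
  let A : ℕ → Y → Set Y := fun n c =>
    Metric.ball c (R - 2 / n) \ ⋃ b ∈ {b : Y | lt b c}, Metric.ball b (R - 1 / n)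
  -- key separation lemma
  have key : ∀ n : ℕ, 1 ≤ n → ∀ c c' : Y, lt c c' →
      ∀ x ∈ A n c, ∀ y ∈ A n c', dist x y > 1 / (n : ℝ) := by
    intro n hn c c' hcc' x hx y hy
    have hn0 : (0 : ℝ) < n := by exact_mod_cast hn
    have hxd : dist x c < R - 2 / n := hx.1
    have hyd : R - 1 / n ≤ dist y c := by
      by_contra h
      push_neg at h
      exact hy.2 (Set.mem_biUnion hcc' (Metric.mem_ball.2 h))
    have htri : dist y c ≤ dist y x + dist x c := dist_triangle y x c
    have : dist x y = dist y x := dist_comm x y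
    have h21 : (2:ℝ) / n = 2 * (1 / n) := by ring
    linarith
  refine ⟨fun n => Set.range (A n), ?_, ?_, ?_, ?_⟩
  · -- coverage
    apply Set.eq_univ_iff_forall.2
    intro x
    have hne : ({c : Y | dist x c < R}).Nonempty := ⟨x, by simpa using hR0⟩
    set c := wf.min {c : Y | dist x c < R} hne with hc
    have hxc : dist x c < R := wf.min_mem _ hne
    obtain ⟨n, hn⟩ := exists_nat_gt (2 / (R - dist x c))
    have hgap : 0 < R - dist x c := by linarith
    have hn0 : (0 : ℝ) < n := lt_trans (by positivity) hn
    have hn1 : 1 ≤ n := by exact_mod_cast hn0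
    have h2n : 2 / (n : ℝ) < R - dist x c := by
      rw [div_lt_iff₀ hn0]
      have := (div_lt_iff₀ hgap).1 hn
      nlinarith
    have hxA : x ∈ A n c := by
      constructor
      · exact Metric.mem_ball.2 (by linarith [dist_comm x c ▸ h2n])
      · intro hmem
        simp only [Set.mem_iUnion, Metric.mem_ball] at hmem
        obtain ⟨b, hb, hdb⟩ := hmem
        have hbR : ¬ dist x b < R := fun h => wf.not_lt_min _ h hb
        have : 0 < (1:ℝ) / n := by positivity
        exact hbR (by linarith)
    refine Set.mem_biUnion (show (1:ℕ) ≤ n from hn1) ?_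
    exact Set.mem_biUnion ⟨c, rfl⟩ hxA
  · -- difference of opens
    rintro n hn S ⟨c, rfl⟩
    exact ⟨_, _, Metric.isOpen_ball, isOpen_biUnion (fun b _ => Metric.isOpen_ball), rfl⟩
  · -- separation
    rintro n hn S ⟨c, rfl⟩ T ⟨c', rfl⟩ hST x hx y hy
    rcases trichotomous_of lt c c' with h | h | h
    · exact key n hn c c' h x hx y hy
    · exact absurd (by rw [h]) hST
    · have := key n hn c' c h y hy x hx
      rwa [dist_comm]
  · -- diameter
    rintro n hn S ⟨c, rfl⟩
    have hlt : EMetric.diam (A n c) ≤ ENNReal.ofReal (ε / 2) := by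
      apply EMetric.diam_le
      intro x hx y hy
      have hx' : dist x c < R := lt_of_lt_of_le hx.1 (by
        have : (0:ℝ) ≤ 2 / n := by positivity
        linarith)
      have hy' : dist y c < R := lt_of_lt_of_le hy.1 (by
        have : (0:ℝ) ≤ 2 / n := by positivity
        linarith)
      rw [edist_dist]
      apply ENNReal.ofReal_le_ofReal
      have := dist_triangle x c y
      have h2 : dist c y = dist y c := dist_comm c y
      rw [hRdef] at hx' hy'
      linarith
    exact lt_of_le_of_lt hlt (by
      rw [ENNReal.ofReal_lt_ofReal_iff hε]
      linarith)
end
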